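/- Fidelity is monotone under partial trace: for positive semidefinite operators ρ, σ on X⊗Y, F(ρ,σ) ≤ F(Tr_Y(ρ), Tr_Y(σ)). -/

import Mathlib

open Matrix
open scoped Kronecker ComplexOrder

noncomputable section

/-- `Φ ⊗ id` : apply a linear map `Φ` on `L(X)` to the first tensor factor of `L(X ⊗ Z)`. -/
def lmapTensorId {n m k : Type*} [Fintype n] [Fintype k]
    (Φ : Matrix n n ℂ →ₗ[ℂ] Matrix m m ℂ)
    (M : Matrix (n × k) (n × k) ℂ) : Matrix (m × k) (m × k) ℂ :=
  fun p q => Φ (fun i j => M (i, p.2) (j, q.2)) p.1 q.1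

/-- `id ⊗ Ψ` : apply a linear map `Ψ` on `L(Z)` to the second tensor factor of `L(Y ⊗ Z)`. -/
def idTensorLmap {n k l : Type*} [Fintype n] [Fintype k]
    (Ψ : Matrix k k ℂ →ₗ[ℂ] Matrix l l ℂ)
    (M : Matrix (n × k) (n × k) ℂ) : Matrix (n × l) (n × l) ℂ :=
  fun p q => Ψ (fun a b => M (p.1, a) (q.1, b)) p.2 q.2

/-- Complete positivity: `Φ ⊗ id_k` maps positive semidefinite operators to positive
semidefinite operators for every finite-dimensional ancilla `k`. -/
def IsCompletelyPositive {n m : Type*} [Fintype n] [Fintype m]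
    (Φ : Matrix n n ℂ →ₗ[ℂ] Matrix m m ℂ) : Prop :=
  ∀ (k : Type) [Fintype k] [DecidableEq k],
    ∀ M : Matrix (n × k) (n × k) ℂ, M.PosSemidef → (lmapTensorId Φ M).PosSemidef

def IsTracePreserving {n m : Type*} [Fintype n] [Fintype m]
    (Φ : Matrix n n ℂ →ₗ[ℂ] Matrix m m ℂ) : Prop :=
  ∀ M : Matrix n n ℂ, (Φ M).trace = M.trace

/-- Partial trace over the first tensor factor. -/
def trFst {n k : Type*} [Fintype n] (M : Matrix (n × k) (n × k) ℂ) : Matrix k k ℂ :=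
  fun a b => ∑ i : n, M (i, a) (i, b)

/-- Partial trace over the second tensor factor. -/
def trSnd {n k : Type*} [Fintype k] (M : Matrix (n × k) (n × k) ℂ) : Matrix n n ℂ :=
  fun i j => ∑ a : k, M (i, a) (j, a)

/-- Hilbert-Schmidt inner product `⟨A, B⟩ = Tr(A* B)`. -/
def minner {n : Type*} [Fintype n] (A B : Matrix n n ℂ) : ℂ := (Aᴴ * B).trace

open Classical in
/-- Square root of a positive semidefinite matrix (junk value `0` otherwise). -/
def msqrt {n : Type*} [Fintype n] [DecidableEq n] (M : Matrix n n ℂ) : Matrix n n ℂ :=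
  if h : M.PosSemidef then h.1.cfc Real.sqrt else 0

/-- Trace norm `‖M‖₁ = Tr √(M* M)`. -/
def traceNorm {n : Type*} [Fintype n] [DecidableEq n] (M : Matrix n n ℂ) : ℝ :=
  (((Matrix.posSemidef_conjTranspose_mul_self M).1.cfc Real.sqrt).trace).re

/-- Fidelity `F(Q, R) = ‖√Q √R‖₁` of positive semidefinite matrices. -/
def fid {n : Type*} [Fintype n] [DecidableEq n] (Q R : Matrix n n ℂ) : ℝ :=
  traceNorm (msqrt Q * msqrt R)

/-- Choi-Jamiolkowski operator `J(Φ) = Σ_{i,j} Φ(|i⟩⟨j|) ⊗ |i⟩⟨j|`. -/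
def choi {n m : Type*} [Fintype n] [DecidableEq n] [Fintype m]
    (Φ : Matrix n n ℂ →ₗ[ℂ] Matrix m m ℂ) : Matrix (m × n) (m × n) ℂ :=
  fun p q => Φ (Matrix.single p.2 q.2 1) p.1 q.1

/-- Tensor product of vectors. -/
def tensorVec {α β : Type*} (v : α → ℂ) (w : β → ℂ) : α × β → ℂ := fun p => v p.1 * w p.2

/-- `u = (|00⟩ + |11⟩)/√2`. -/
def uVec : Fin 2 × Fin 2 → ℂ := fun p =>
  if p = (0, 0) then (Real.sqrt 2 : ℂ)⁻¹ else if p = (1, 1) then (Real.sqrt 2 : ℂ)⁻¹ else 0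

/-- `v = cos(π/8)|00⟩ + sin(π/8)|11⟩`. -/
def vVec : Fin 2 × Fin 2 → ℂ := fun p =>
  if p = (0, 0) then (Real.cos (Real.pi / 8) : ℂ)
  else if p = (1, 1) then (Real.sin (Real.pi / 8) : ℂ) else 0

/-- `w = -sin(π/8)|00⟩ + cos(π/8)|11⟩`. -/
def wVec : Fin 2 × Fin 2 → ℂ := fun p =>
  if p = (0, 0) then -(Real.sin (Real.pi / 8) : ℂ)
  else if p = (1, 1) then (Real.cos (Real.pi / 8) : ℂ) else 0


/-- Square root of a positive semidefinite matrix, via the Hermitian functional calculus. -/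
@[irreducible] def Matrix.PosSemidef.sqrt {n : Type*} [Fintype n] [DecidableEq n] {M : Matrix n n ℂ}
    (h : M.PosSemidef) : Matrix n n ℂ := h.1.cfc Real.sqrt

lemma Matrix.PosSemidef.sqrt_def {n : Type*} [Fintype n] [DecidableEq n] {M : Matrix n n ℂ}
    (h : M.PosSemidef) : h.sqrt = h.1.cfc Real.sqrt := by
  unfold Matrix.PosSemidef.sqrt
  rfl

lemma Matrix.PosSemidef.sqrt_eq {n : Type*} [Fintype n] [DecidableEq n] {M : Matrix n n ℂ}
    (h : M.PosSemidef) : h.sqrt = (h.1.eigenvectorUnitary : Matrix n n ℂ) *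
      diagonal (fun i => ((Real.sqrt (h.1.eigenvalues i) : ℝ) : ℂ)) *
      (h.1.eigenvectorUnitary : Matrix n n ℂ)ᴴ := by
  simp only [Matrix.PosSemidef.sqrt_def, IsHermitian.cfc, Unitary.conjStarAlgAut_apply,
    Matrix.star_eq_conjTranspose]
  rfl

lemma Matrix.PosSemidef.sqrt_mul_self {n : Type*} [Fintype n] [DecidableEq n] {M : Matrix n n ℂ}
    (h : M.PosSemidef) : h.sqrt * h.sqrt = M := by
  have hUU : (h.1.eigenvectorUnitary : Matrix n n ℂ)ᴴ * (h.1.eigenvectorUnitary : Matrix n n ℂ)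
      = 1 := by
    simpa [Matrix.star_eq_conjTranspose] using
      (Unitary.coe_star_mul_self h.1.eigenvectorUnitary)
  conv_rhs => rw [h.1.spectral_theorem]
  rw [h.sqrt_eq, Unitary.conjStarAlgAut_apply, Matrix.star_eq_conjTranspose]
  calc _ = (h.1.eigenvectorUnitary : Matrix n n ℂ) *
      (diagonal (fun i => ((Real.sqrt (h.1.eigenvalues i) : ℝ) : ℂ)) *
      ((h.1.eigenvectorUnitary : Matrix n n ℂ)ᴴ * (h.1.eigenvectorUnitary : Matrix n n ℂ)) *
      diagonal (fun i => ((Real.sqrt (h.1.eigenvalues i) : ℝ) : ℂ))) *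
      (h.1.eigenvectorUnitary : Matrix n n ℂ)ᴴ := by simp only [Matrix.mul_assoc]
    _ = _ := by
      rw [hUU, Matrix.mul_one, diagonal_mul_diagonal]
      congr 2
      ext i j
      simp only [diagonal_apply, Function.comp_apply, RCLike.ofReal_eq_complex_ofReal]
      split_ifs
      · exact_mod_cast Real.mul_self_sqrt (h.eigenvalues_nonneg i)
      · rfl

lemma Matrix.PosSemidef.posSemidef_sqrt {n : Type*} [Fintype n] [DecidableEq n]
    {M : Matrix n n ℂ} (h : M.PosSemidef) : h.sqrt.PosSemidef := by
  rw [h.sqrt_eq]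
  have hd : (diagonal (fun i => ((Real.sqrt (h.1.eigenvalues i) : ℝ) : ℂ))).PosSemidef := by
    rw [posSemidef_diagonal_iff]
    intro i
    exact_mod_cast Real.sqrt_nonneg _
  simpa using hd.mul_mul_conjTranspose_same (h.1.eigenvectorUnitary : Matrix n n ℂ)

lemma psd_trace_re_nonneg {m : Type*} [Fintype m] [DecidableEq m] {M : Matrix m m ℂ}
    (hM : M.PosSemidef) : 0 ≤ M.trace.re := by
  have h : ∀ i, 0 ≤ (M i i).re := by
    intro i
    have := hM.dotProduct_mulVec_nonneg (Pi.single i 1)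
    rw [Complex.nonneg_iff] at this
    simpa [dotProduct, mulVec, Pi.single_apply] using this.1
  simpa [Matrix.trace, Matrix.diag, Complex.re_sum] using Finset.sum_nonneg (fun i _ => h i)

lemma trace_re_le_of_psd_sub {m : Type*} [Fintype m] [DecidableEq m] {A B : Matrix m m ℂ}
    (h : (B - A).PosSemidef) : A.trace.re ≤ B.trace.re := by
  have := psd_trace_re_nonneg h
  rw [Matrix.trace_sub] at this
  simp only [Complex.sub_re] at this
  linarith

lemma trace_cauchy_schwarz {a b : Type*} [Fintype a] [Fintype b] (F G : Matrix a b ℂ) :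
    ‖(Fᴴ * G).trace‖ ≤
      Real.sqrt ((Fᴴ * F).trace.re) * Real.sqrt ((Gᴴ * G).trace.re) := by
  let f : EuclideanSpace ℂ (a × b) := WithLp.toLp 2 (fun p => F p.1 p.2)
  let g : EuclideanSpace ℂ (a × b) := WithLp.toLp 2 (fun p => G p.1 p.2)
  have htr : ∀ (X Y : Matrix a b ℂ), (Xᴴ * Y).trace =
      ∑ p : a × b, (starRingEnd ℂ) (X p.1 p.2) * Y p.1 p.2 := by
    intro X Y
    rw [Matrix.trace, Fintype.sum_prod_type]
    rw [Finset.sum_comm]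
    simp [Matrix.diag, Matrix.mul_apply, Matrix.conjTranspose_apply]
  have hinner : inner ℂ f g = (Fᴴ * G).trace := by
    rw [htr]
    simp [f, g, PiLp.inner_apply, RCLike.inner_apply, mul_comm]
  have key : ∀ (X : Matrix a b ℂ), (Xᴴ * X).trace.re =
      ∑ p : a × b, ‖X p.1 p.2‖ ^ 2 := by
    intro X
    rw [htr, Complex.re_sum]
    congr 1; ext p
    rw [mul_comm, Complex.mul_conj]
    simp [Complex.normSq_eq_norm_sq, ← Complex.ofReal_pow]
  have hnf : ‖f‖ = Real.sqrt ((Fᴴ * F).trace.re) := by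
    rw [EuclideanSpace.norm_eq, key]
  have hng : ‖g‖ = Real.sqrt ((Gᴴ * G).trace.re) := by
    rw [EuclideanSpace.norm_eq, key]
  calc ‖(Fᴴ * G).trace‖ = ‖inner f g (𝕜 := ℂ)‖ := by rw [hinner]
    _ ≤ ‖f‖ * ‖g‖ := norm_inner_le_norm f g
    _ = _ := by rw [hnf, hng]

lemma polar_aux {a b : Type*} [Fintype a] [Fintype b] [DecidableEq b]
    (A : Matrix a b ℂ) {H : Matrix b b ℂ} (hH : H.PosSemidef) (hfact : Aᴴ * A = H) :
    ∃ W : Matrix a b ℂ, A = W * hH.sqrt ∧ (1 - Wᴴ * W).PosSemidef ∧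
      Wᴴ * W * hH.sqrt = hH.sqrt := by
  set U : Matrix b b ℂ := (hH.1.eigenvectorUnitary : Matrix b b ℂ) with hU
  have hUU : Uᴴ * U = 1 := by
    simpa [Matrix.star_eq_conjTranspose] using (Unitary.coe_star_mul_self hH.1.eigenvectorUnitary)
  have hUU' : U * Uᴴ = 1 := by
    simpa [Matrix.star_eq_conjTranspose] using (Unitary.coe_mul_star_self hH.1.eigenvectorUnitary)
  set e : b → ℝ := hH.1.eigenvalues with he
  have hepos : ∀ i, 0 ≤ e i := hH.eigenvalues_nonneg
  set s : b → ℂ := fun i => ((Real.sqrt (e i) : ℝ) : ℂ) with hs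
  set d : b → ℂ := fun i => ((e i : ℝ) : ℂ) with hd
  have hsqrt : hH.sqrt = U * diagonal s * Uᴴ := hH.sqrt_eq
  have hspec : H = U * diagonal d * Uᴴ := by
    have := hH.1.spectral_theorem
    rw [Unitary.conjStarAlgAut_apply, Matrix.star_eq_conjTranspose] at this
    exact this
  set g : b → ℂ := fun i => ((if e i = 0 then 0 else (Real.sqrt (e i))⁻¹ : ℝ) : ℂ) with hg
  set ind : b → ℂ := fun i => if e i = 0 then 0 else 1 with hind
  set N : Matrix a b ℂ := A * U with hN
  have hAU : Nᴴ * N = diagonal d := by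
    rw [hN, conjTranspose_mul]
    calc Uᴴ * Aᴴ * (A * U) = Uᴴ * (Aᴴ * A) * U := by simp only [Matrix.mul_assoc]
      _ = Uᴴ * (U * diagonal d * Uᴴ) * U := by rw [hfact, hspec]
      _ = (Uᴴ * U) * diagonal d * (Uᴴ * U) := by simp only [Matrix.mul_assoc]
      _ = diagonal d := by rw [hUU]; simp [Matrix.mul_assoc, hUU]
  have hcol : ∀ j, e j = 0 → ∀ i, N i j = 0 := by
    intro j hj i
    have h2 : (Nᴴ * N) j j = ∑ i, ((starRingEnd ℂ) (N i j) * N i j) := by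
      simp only [Matrix.mul_apply, Matrix.conjTranspose_apply]
      rfl
    have h1 : (∑ i, ((starRingEnd ℂ) (N i j) * N i j)) = 0 := by
      rw [← h2, hAU]
      simp [hd, hj]
    have h0 : ∑ i, Complex.normSq (N i j) = 0 := by
      have := congrArg Complex.re h1
      rw [Complex.re_sum] at this
      simpa [Complex.normSq_apply, Complex.mul_re] using this
    have := (Finset.sum_eq_zero_iff_of_nonneg
      (fun i _ => Complex.normSq_nonneg (N i j))).mp h0 i (Finset.mem_univ i)
    exact Complex.normSq_eq_zero.mp this
  have hproj : N * diagonal ind = N := by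
    ext i j
    rw [mul_diagonal]
    by_cases hj : e j = 0
    · rw [hcol j hj i]; simp
    · simp [hind, hj]
  set W : Matrix a b ℂ := N * diagonal g * Uᴴ with hW
  have hsne : ∀ i, e i ≠ 0 → Real.sqrt (e i) ≠ 0 := by
    intro i hi
    have := lt_of_le_of_ne (hepos i) (Ne.symm hi)
    positivity
  have hgs : (fun i => g i * s i) = ind := by
    funext i
    by_cases hi : e i = 0
    · simp [hg, hs, hind, hi]
    · simp only [hg, hs, hind, if_neg hi]
      rw [← Complex.ofReal_mul, inv_mul_cancel₀ (hsne i hi)]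
      simp
  have hgdg : (fun i => g i * d i * g i) = ind := by
    funext i
    by_cases hi : e i = 0
    · simp [hg, hd, hind, hi]
    · simp only [hg, hd, hind, if_neg hi]
      rw [← Complex.ofReal_mul, ← Complex.ofReal_mul,
        show (Real.sqrt (e i))⁻¹ * (e i) * (Real.sqrt (e i))⁻¹ = 1 by
          rw [mul_comm, ← mul_assoc, ← mul_inv, Real.mul_self_sqrt (hepos i),
            inv_mul_cancel₀ hi]]
      simp
  have hinds : (fun i => ind i * s i) = s := by
    funext i
    by_cases hi : e i = 0
    · simp [hind, hs, hi]
    · simp [hind, hs, hi]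
  have hWsqrt : W * hH.sqrt = A := by
    rw [hW, hsqrt]
    calc N * diagonal g * Uᴴ * (U * diagonal s * Uᴴ)
        = N * (diagonal g * (Uᴴ * U) * diagonal s) * Uᴴ := by simp only [Matrix.mul_assoc]
      _ = N * (diagonal (fun i => g i * s i)) * Uᴴ := by
            rw [hUU]
            simp only [Matrix.mul_one, diagonal_mul_diagonal]
      _ = N * Uᴴ := by rw [hgs, hproj]
      _ = A := by rw [Matrix.mul_assoc, hUU', Matrix.mul_one]
  have hstarg : star g = g := by
    funext i; simp [hg, Complex.conj_ofReal]
  have hWH : Wᴴ = U * diagonal g * Nᴴ := by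
    rw [hW]
    simp only [conjTranspose_mul, conjTranspose_conjTranspose, diagonal_conjTranspose]
    rw [Pi.star_def]
    have : (fun i => star (g i)) = g := hstarg
    rw [this]
    simp only [Matrix.mul_assoc]
  have hWHW : Wᴴ * W = U * diagonal ind * Uᴴ := by
    rw [hWH, hW]
    calc U * diagonal g * Nᴴ * (N * diagonal g * Uᴴ)
        = U * (diagonal g * (Nᴴ * N) * diagonal g) * Uᴴ := by simp only [Matrix.mul_assoc]
      _ = U * (diagonal (fun i => g i * d i * g i)) * Uᴴ := by
          rw [hAU, diagonal_mul_diagonal, diagonal_mul_diagonal]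
      _ = U * diagonal ind * Uᴴ := by rw [hgdg]
  refine ⟨W, hWsqrt.symm, ?_, ?_⟩
  · rw [hWHW]
    have hsub : (1 : Matrix b b ℂ) - U * diagonal ind * Uᴴ
        = U * diagonal (fun i => 1 - ind i) * Uᴴ := by
      have hone : (1 : Matrix b b ℂ) = U * diagonal (fun _ => (1:ℂ)) * Uᴴ := by
        simp [diagonal_one, hUU']
      rw [hone]
      rw [show U * diagonal (fun _ => (1:ℂ)) * Uᴴ - U * diagonal ind * Uᴴ
        = U * (diagonal (fun _ => (1:ℂ)) - diagonal ind) * Uᴴ by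
          simp only [Matrix.mul_assoc, Matrix.mul_sub, Matrix.sub_mul]]
      rw [diagonal_sub]
    rw [hsub]
    have h1 : (fun i => star ((1:ℂ) - ind i)) = fun i => (1:ℂ) - ind i := by
      funext i
      by_cases hi : e i = 0 <;> simp [hind, hi]
    have h2 : (fun i => ((1:ℂ) - ind i) * ((1:ℂ) - ind i)) = fun i => (1:ℂ) - ind i := by
      funext i
      by_cases hi : e i = 0 <;> simp [hind, hi]
    have hfac : U * diagonal (fun i => 1 - ind i) * Uᴴ = (diagonal (fun i => 1 - ind i) * Uᴴ)ᴴ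
        * (diagonal (fun i => 1 - ind i) * Uᴴ) := by
      simp only [conjTranspose_mul, conjTranspose_conjTranspose, diagonal_conjTranspose]
      rw [Pi.star_def]
      rw [h1]
      calc U * diagonal (fun i => 1 - ind i) * Uᴴ
          = U * (diagonal (fun i => (1:ℂ) - ind i) * diagonal (fun i => (1:ℂ) - ind i)) * Uᴴ := by
            rw [diagonal_mul_diagonal, h2]
        _ = U * diagonal (fun i => 1 - ind i) * (diagonal (fun i => 1 - ind i) * Uᴴ) := by
            simp only [Matrix.mul_assoc]
    rw [hfac]
    exact posSemidef_conjTranspose_mul_self _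
  · rw [hWHW, hsqrt]
    calc U * diagonal ind * Uᴴ * (U * diagonal s * Uᴴ)
        = U * (diagonal ind * (Uᴴ * U) * diagonal s) * Uᴴ := by simp only [Matrix.mul_assoc]
      _ = U * diagonal (fun i => ind i * s i) * Uᴴ := by
          rw [hUU]
          simp only [Matrix.mul_one, diagonal_mul_diagonal]
      _ = U * diagonal s * Uᴴ := by rw [hinds]

section Aux
variable {m : Type*} [Fintype m] [DecidableEq m]

lemma sandwich_le {R N : Matrix m m ℂ} (hR : Rᴴ = R) (hN : (1 - N).PosSemidef) :
    (R * N * R).trace.re ≤ (R * R).trace.re := by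
  apply trace_re_le_of_psd_sub
  have h := hN.conjTranspose_mul_mul_same R
  have he : R * R - R * N * R = Rᴴ * (1 - N) * R := by
    rw [hR]; noncomm_ring
  rw [he]; exact h

lemma fid_eq {P Q : Matrix m m ℂ} (hP : P.PosSemidef) (hQ : Q.PosSemidef) :
    fid P Q = ((posSemidef_conjTranspose_mul_self (hP.sqrt * hQ.sqrt)).sqrt.trace).re := by
  have h1 : msqrt P = hP.sqrt := by rw [msqrt, dif_pos hP, Matrix.PosSemidef.sqrt_def]
  have h2 : msqrt Q = hQ.sqrt := by rw [msqrt, dif_pos hQ, Matrix.PosSemidef.sqrt_def]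
  rw [fid, h1, h2, traceNorm]
  exact congrArg (fun x => (Matrix.trace x).re) (Matrix.PosSemidef.sqrt_def (posSemidef_conjTranspose_mul_self (hP.sqrt * hQ.sqrt))).symm

lemma gram_fromBlocks {a : Type*} [Fintype a] (C₁ C₂ : Matrix a m ℂ) :
    (of fun i q => Sum.elim (fun x => C₁ i x) (fun x => C₂ i x) q : Matrix a (m ⊕ m) ℂ)ᴴ *
      (of fun i q => Sum.elim (fun x => C₁ i x) (fun x => C₂ i x) q : Matrix a (m ⊕ m) ℂ) =
      fromBlocks (C₁ᴴ * C₁) (C₁ᴴ * C₂) (C₂ᴴ * C₁) (C₂ᴴ * C₂) := by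
  ext p q
  cases p <;> cases q <;>
    simp [Matrix.mul_apply, Matrix.conjTranspose_apply, Matrix.fromBlocks]

lemma fromBlocks_zero_zero_zero_psd {E : Matrix m m ℂ} (hE : E.PosSemidef) :
    (fromBlocks (0 : Matrix m m ℂ) 0 0 E).PosSemidef := by
  have h : fromBlocks (0 : Matrix m m ℂ) 0 0 E =
      (fromBlocks (0 : Matrix m m ℂ) 0 0 hE.sqrt)ᴴ * (fromBlocks 0 0 0 hE.sqrt) := by
    rw [Matrix.fromBlocks_conjTranspose, Matrix.fromBlocks_multiply]
    simp [hE.posSemidef_sqrt.1.eq, hE.sqrt_mul_self]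
  rw [h]
  exact posSemidef_conjTranspose_mul_self _

/-- Achievability: the fidelity value is attained by an off-diagonal block `X`
making the 2×2 block matrix PSD. -/
lemma exists_block {P Q : Matrix m m ℂ} (hP : P.PosSemidef) (hQ : Q.PosSemidef) :
    ∃ X : Matrix m m ℂ, (fromBlocks P X Xᴴ Q).PosSemidef ∧ X.trace.re = fid P Q := by
  set A : Matrix m m ℂ := hP.sqrt * hQ.sqrt with hA
  have hH := posSemidef_conjTranspose_mul_self A
  set T : Matrix m m ℂ := hH.sqrt with hT
  obtain ⟨V, hV1, hV2, hV3⟩ := polar_aux A hH rfl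
  have hTH : Tᴴ = T := hH.posSemidef_sqrt.1
  refine ⟨hP.sqrt * V * hQ.sqrt, ?_, ?_⟩
  · have h11 : hP.sqrtᴴ * hP.sqrt = P := by
      rw [hP.posSemidef_sqrt.1.eq, hP.sqrt_mul_self]
    have h12 : hP.sqrtᴴ * (V * hQ.sqrt) = hP.sqrt * V * hQ.sqrt := by
      rw [hP.posSemidef_sqrt.1.eq, Matrix.mul_assoc]
    have h21 : (V * hQ.sqrt)ᴴ * hP.sqrt = (hP.sqrt * V * hQ.sqrt)ᴴ := by
      rw [← h12, Matrix.conjTranspose_mul (hP.sqrtᴴ) (V * hQ.sqrt),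
        Matrix.conjTranspose_conjTranspose]
    have hkey : fromBlocks P (hP.sqrt * V * hQ.sqrt) (hP.sqrt * V * hQ.sqrt)ᴴ Q =
        fromBlocks (hP.sqrtᴴ * hP.sqrt) (hP.sqrtᴴ * (V * hQ.sqrt))
            ((V * hQ.sqrt)ᴴ * hP.sqrt) ((V * hQ.sqrt)ᴴ * (V * hQ.sqrt))
          + fromBlocks 0 0 0 (Q - (V * hQ.sqrt)ᴴ * (V * hQ.sqrt)) := by
      rw [Matrix.fromBlocks_add, h11, h12, h21]
      congr 1
      all_goals simp
    rw [hkey, ← gram_fromBlocks hP.sqrt (V * hQ.sqrt)]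
    apply (posSemidef_conjTranspose_mul_self _).add
    apply fromBlocks_zero_zero_zero_psd
    have h1 : Q - (V * hQ.sqrt)ᴴ * (V * hQ.sqrt) = hQ.sqrtᴴ * (1 - Vᴴ * V) * hQ.sqrt := by
      have hexp : (V * hQ.sqrt)ᴴ * (V * hQ.sqrt) = hQ.sqrt * (Vᴴ * (V * hQ.sqrt)) := by
        simp only [Matrix.conjTranspose_mul, hQ.posSemidef_sqrt.1.eq, Matrix.mul_assoc]
      rw [hexp, hQ.posSemidef_sqrt.1.eq]
      have h2 : hQ.sqrt * (1 - Vᴴ * V) * hQ.sqrt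
          = hQ.sqrt * hQ.sqrt - hQ.sqrt * (Vᴴ * V) * hQ.sqrt := by noncomm_ring
      rw [h2, hQ.sqrt_mul_self]
      simp only [Matrix.mul_assoc]
    rw [h1]
    exact hV2.conjTranspose_mul_mul_same _
  · have htr : (hP.sqrt * V * hQ.sqrt).trace = T.trace := by
      calc (hP.sqrt * V * hQ.sqrt).trace = (V * (hQ.sqrt * hP.sqrt)).trace := by
            rw [Matrix.mul_assoc, Matrix.trace_mul_comm, Matrix.mul_assoc]
        _ = (V * (T * Vᴴ)).trace := by
            rw [show hQ.sqrt * hP.sqrt = T * Vᴴ by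
              have : Aᴴ = (V * T)ᴴ := by rw [← hV1]
              rw [hA, Matrix.conjTranspose_mul, hQ.posSemidef_sqrt.1.eq,
                hP.posSemidef_sqrt.1.eq] at this
              rw [this, Matrix.conjTranspose_mul, hTH]]
        _ = ((V * T) * Vᴴ).trace := by rw [Matrix.mul_assoc]
        _ = (Vᴴ * (V * T)).trace := by rw [Matrix.trace_mul_comm]
        _ = T.trace := by rw [← Matrix.mul_assoc, hV3]
    rw [htr, fid_eq hP hQ]

/-- Optimality: any PSD 2×2 block bound gives a value at most the fidelity. -/
lemma block_le_fid {P Q X : Matrix m m ℂ} (hP : P.PosSemidef) (hQ : Q.PosSemidef)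
    (hM : (fromBlocks P X Xᴴ Q).PosSemidef) : X.trace.re ≤ fid P Q := by
  set M : Matrix (m ⊕ m) (m ⊕ m) ℂ := fromBlocks P X Xᴴ Q with hMdef
  set S : Matrix (m ⊕ m) (m ⊕ m) ℂ := hM.sqrt with hS
  have hSH : Sᴴ = S := hM.posSemidef_sqrt.1
  set C₁ : Matrix (m ⊕ m) m ℂ := S.submatrix id Sum.inl with hC₁
  set C₂ : Matrix (m ⊕ m) m ℂ := S.submatrix id Sum.inr with hC₂
  have hSS : Sᴴ * S = M := by rw [hSH, hM.sqrt_mul_self]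
  have hsub : ∀ (e₁ e₂ : m → m ⊕ m), (Sᴴ.submatrix e₁ id) * (S.submatrix id e₂)
      = M.submatrix e₁ e₂ := by
    intro e₁ e₂
    rw [← Matrix.submatrix_mul _ _ _ _ _ Function.bijective_id, hSS]
  have hC11 : C₁ᴴ * C₁ = P := by
    rw [hC₁, Matrix.conjTranspose_submatrix, hsub]
    ext a b; simp [hMdef, Matrix.fromBlocks]
  have hC22 : C₂ᴴ * C₂ = Q := by
    rw [hC₂, Matrix.conjTranspose_submatrix, hsub]
    ext a b; simp [hMdef, Matrix.fromBlocks]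
  have hC12 : C₁ᴴ * C₂ = X := by
    rw [hC₁, hC₂, Matrix.conjTranspose_submatrix, hsub]
    ext a b; simp [hMdef, Matrix.fromBlocks]
  obtain ⟨W₁, hW₁1, hW₁2, -⟩ := polar_aux C₁ hP hC11
  obtain ⟨W₂, hW₂1, hW₂2, -⟩ := polar_aux C₂ hQ hC22
  set B : Matrix m m ℂ := hP.sqrt * hQ.sqrt with hB
  have hHB := posSemidef_conjTranspose_mul_self B
  set T : Matrix m m ℂ := hHB.sqrt with hTd
  obtain ⟨V, hV1, hV2, -⟩ := polar_aux B hHB rfl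
  have hTH : Tᴴ = T := hHB.posSemidef_sqrt.1
  have hTpsd : T.PosSemidef := hHB.posSemidef_sqrt
  set R : Matrix m m ℂ := hTpsd.sqrt with hRd
  have hRH : Rᴴ = R := hTpsd.posSemidef_sqrt.1
  have hRR : R * R = T := hTpsd.sqrt_mul_self
  have hfid : fid P Q = T.trace.re := fid_eq hP hQ
  have hfid0 : 0 ≤ fid P Q := by rw [hfid]; exact psd_trace_re_nonneg hTpsd
  -- rewrite the trace
  set F : Matrix (m ⊕ m) m ℂ := W₁ * V * R with hFd
  set G : Matrix (m ⊕ m) m ℂ := W₂ * R with hGd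
  have hXtr : X.trace = (Fᴴ * G).trace := by
    have hQP : hQ.sqrt * hP.sqrt = T * Vᴴ := by
      have : Bᴴ = (V * T)ᴴ := by rw [← hV1]
      rw [hB, Matrix.conjTranspose_mul, hQ.posSemidef_sqrt.1.eq,
        hP.posSemidef_sqrt.1.eq] at this
      rw [this, Matrix.conjTranspose_mul, hTH]
    have hFH : Fᴴ = R * Vᴴ * W₁ᴴ := by
      rw [hFd]
      simp only [Matrix.conjTranspose_mul, hRH, Matrix.mul_assoc]
    calc X.trace = (hP.sqrt * (W₁ᴴ * W₂) * hQ.sqrt).trace := by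
          rw [← hC12, hW₁1, hW₂1]
          simp only [Matrix.conjTranspose_mul, hP.posSemidef_sqrt.1.eq, Matrix.mul_assoc]
      _ = ((W₁ᴴ * W₂) * (hQ.sqrt * hP.sqrt)).trace := by
          rw [Matrix.trace_mul_comm (hP.sqrt * (W₁ᴴ * W₂)) hQ.sqrt, ← Matrix.mul_assoc,
            Matrix.trace_mul_comm (hQ.sqrt * hP.sqrt) (W₁ᴴ * W₂)]
      _ = ((W₁ᴴ * W₂ * T) * Vᴴ).trace := by
          rw [hQP]
          simp only [Matrix.mul_assoc]
      _ = (Vᴴ * (W₁ᴴ * W₂ * T)).trace := Matrix.trace_mul_comm (W₁ᴴ * W₂ * T) Vᴴ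
      _ = ((Vᴴ * (W₁ᴴ * (W₂ * R))) * R).trace := by
          rw [← hRR]
          simp only [Matrix.mul_assoc]
      _ = (R * (Vᴴ * (W₁ᴴ * (W₂ * R)))).trace :=
          Matrix.trace_mul_comm (Vᴴ * (W₁ᴴ * (W₂ * R))) R
      _ = (Fᴴ * G).trace := by
          rw [hFH, hGd]
          simp only [Matrix.mul_assoc]
  have hFF : (Fᴴ * F).trace.re ≤ fid P Q := by
    have hN : (1 - (W₁ * V)ᴴ * (W₁ * V)).PosSemidef := by
      have h1 : (1 : Matrix m m ℂ) - (W₁ * V)ᴴ * (W₁ * V)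
          = (1 - Vᴴ * V) + Vᴴ * (1 - W₁ᴴ * W₁) * V := by
        simp only [Matrix.conjTranspose_mul]
        rw [Matrix.mul_sub, Matrix.sub_mul, Matrix.mul_one]
        simp only [Matrix.mul_assoc]
        abel
      rw [h1]
      exact hV2.add (hW₁2.conjTranspose_mul_mul_same V)
    have he : Fᴴ * F = R * ((W₁ * V)ᴴ * (W₁ * V)) * R := by
      rw [hFd]
      simp only [Matrix.conjTranspose_mul, hRH, Matrix.mul_assoc]
    rw [he, hfid, ← hRR]
    exact sandwich_le hRH hN
  have hGG : (Gᴴ * G).trace.re ≤ fid P Q := by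
    have he : Gᴴ * G = R * (W₂ᴴ * W₂) * R := by
      rw [hGd]
      simp only [Matrix.conjTranspose_mul, hRH, Matrix.mul_assoc]
    rw [he, hfid, ← hRR]
    exact sandwich_le hRH hW₂2
  calc X.trace.re ≤ ‖X.trace‖ := Complex.re_le_norm _
    _ = ‖(Fᴴ * G).trace‖ := by rw [hXtr]
    _ ≤ Real.sqrt ((Fᴴ * F).trace.re) * Real.sqrt ((Gᴴ * G).trace.re) :=
        trace_cauchy_schwarz F G
    _ ≤ Real.sqrt (fid P Q) * Real.sqrt (fid P Q) :=
        mul_le_mul (Real.sqrt_le_sqrt hFF) (Real.sqrt_le_sqrt hGG)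
          (Real.sqrt_nonneg _) (Real.sqrt_nonneg _)
    _ = fid P Q := Real.mul_self_sqrt hfid0

end Aux


section PT
variable {n k : Type*} [Fintype n] [Fintype k] [DecidableEq n] [DecidableEq k]

lemma trSnd_conjTranspose (M : Matrix (n × k) (n × k) ℂ) :
    (trSnd M)ᴴ = trSnd Mᴴ := by
  ext i j
  simp [trSnd, Matrix.conjTranspose_apply, map_sum]

lemma trSnd_trace (M : Matrix (n × k) (n × k) ℂ) :
    (trSnd M).trace = M.trace := by
  simp [trSnd, Matrix.trace, Matrix.diag, Fintype.sum_prod_type]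

lemma trSnd_posSemidef {M : Matrix (n × k) (n × k) ℂ} (hM : M.PosSemidef) :
    (trSnd M).PosSemidef := by
  refine PosSemidef.of_dotProduct_mulVec_nonneg ?_ ?_
  · show (trSnd M)ᴴ = trSnd M
    rw [trSnd_conjTranspose, hM.1.eq]
  · intro y
    have inner_eq : ∀ a : k, (star (fun p : n × k => if p.2 = a then y p.1 else 0) ⬝ᵥ
        M *ᵥ (fun p : n × k => if p.2 = a then y p.1 else 0))
        = ∑ i, ∑ j, (starRingEnd ℂ) (y i) * (M (i, a) (j, a) * y j) := by
      intro a
      simp only [dotProduct, Matrix.mulVec, Pi.star_apply, Fintype.sum_prod_type]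
      rw [Finset.sum_comm]
      simp [apply_ite, ite_mul, mul_ite, Finset.mul_sum]
    have key : star y ⬝ᵥ (trSnd M) *ᵥ y
        = ∑ a : k, ∑ i, ∑ j, (starRingEnd ℂ) (y i) * (M (i, a) (j, a) * y j) := by
      have expand : star y ⬝ᵥ (trSnd M) *ᵥ y
          = ∑ i, ∑ j, ∑ a, (starRingEnd ℂ) (y i) * (M (i, a) (j, a) * y j) := by
        simp only [dotProduct, Matrix.mulVec, Pi.star_apply, trSnd, Finset.sum_mul,
          Finset.mul_sum]
        rfl
      rw [expand]
      have h1 : ∀ i : n, (∑ j, ∑ a, (starRingEnd ℂ) (y i) * (M (i, a) (j, a) * y j))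
          = ∑ a, ∑ j, (starRingEnd ℂ) (y i) * (M (i, a) (j, a) * y j) := fun i =>
        Finset.sum_comm
      simp only [h1]
      exact Finset.sum_comm
    rw [key]
    simp only [← inner_eq]
    exact Finset.sum_nonneg fun a _ => hM.dotProduct_mulVec_nonneg _

/-- reindexing map `(n ⊕ n) × k → (n × k) ⊕ (n × k)`. -/
def blkEmb : (n ⊕ n) × k → (n × k) ⊕ (n × k) :=
  fun q => q.1.elim (fun i => Sum.inl (i, q.2)) (fun i => Sum.inr (i, q.2))

lemma trSnd_fromBlocks (ρ X Y σ : Matrix (n × k) (n × k) ℂ) :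
    fromBlocks (trSnd ρ) (trSnd X) (trSnd Y) (trSnd σ)
      = trSnd ((fromBlocks ρ X Y σ).submatrix blkEmb blkEmb) := by
  ext p q
  cases p <;> cases q <;>
    simp [trSnd, Matrix.fromBlocks, blkEmb, Matrix.submatrix_apply]

end PT

/-- Monotonicity of fidelity under the partial trace: for positive semidefinite `ρ, σ` on
`X ⊗ Y`, `F(ρ, σ) ≤ F(Tr_Y(ρ), Tr_Y(σ))`. -/
theorem stmt9 {n k : Type*} [Fintype n] [DecidableEq n] [Fintype k] [DecidableEq k]
    (ρ σ : Matrix (n × k) (n × k) ℂ) (hρ : ρ.PosSemidef) (hσ : σ.PosSemidef) :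
    fid ρ σ ≤ fid (trSnd ρ) (trSnd σ) := by
  obtain ⟨X, hbl, htr⟩ := exists_block hρ hσ
  have hP' : (trSnd ρ).PosSemidef := trSnd_posSemidef hρ
  have hQ' : (trSnd σ).PosSemidef := trSnd_posSemidef hσ
  have hbl' : (fromBlocks (trSnd ρ) (trSnd X) (trSnd X)ᴴ (trSnd σ)).PosSemidef := by
    rw [trSnd_conjTranspose, trSnd_fromBlocks]
    exact trSnd_posSemidef (hbl.submatrix blkEmb)
  have h := block_le_fid hP' hQ' hbl'
  rw [trSnd_trace, htr] at h
  exact h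

end
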